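/- Let a ∈ ℝ, α, β ∈ ℝ, and let u, v : ℝ → ℂ be three times continuously differentiable functions such that u, u', u'', u''' and v, v', v'', v''' are all square-integrable on (a, ∞), and such that the functions conj(u)·(α v''' + β v') and conj(α u''' + β u')·v are integrable on (a, ∞). Then ∫_a^∞ conj(u(x))·(α·v'''(x) + β·v'(x)) dx + ∫_a^∞ conj(α·u'''(x) + β·u'(x))·v(x) dx = − Φ(u,v)(a), where Φ(u,v)(x) = α·(conj(u(x))·v''(x) − conj(u'(x))·v'(x) + conj(u''(x))·v(x)) + β·conj(u(x))·v(x). (This is the integration-by-parts identity on a semi-infinite edge of a metric graph: the boundary contribution at infinity vanishes.) -/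

import Mathlib

open MeasureTheory Complex
open scoped ENNReal

private lemma conjL2_mul_integrable (a : ℝ) (f g : ℝ → ℂ)
    (hf : MemLp f 2 (volume.restrict (Set.Ioi a)))
    (hg : MemLp g 2 (volume.restrict (Set.Ioi a))) :
    Integrable (fun x => (starRingEnd ℂ) (f x) * g x) (volume.restrict (Set.Ioi a)) := by
  have hcf : MemLp (fun x => (starRingEnd ℂ) (f x)) 2 (volume.restrict (Set.Ioi a)) := by
    refine MemLp.of_le hf (Complex.continuous_conj.comp_aestronglyMeasurable hf.1) ?_
    filter_upwards with x
    simp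
  have hpqr : (1:ℝ≥0∞)/1 = 1/2 + 1/2 := by rw [div_one, ENNReal.add_halves]
  have h2 := hg.smul hcf (r := 1)
  rw [memLp_one_iff_integrable] at h2
  simpa [Pi.smul_apply, smul_eq_mul, Pi.mul_def] using h2

theorem linearizedKdV_integration_by_parts_halfline
    (a : ℝ) (α β : ℝ) (u v : ℝ → ℂ)
    (hu : ContDiff ℝ 3 u) (hv : ContDiff ℝ 3 v)
    (huL2 : ∀ k ≤ 3, MemLp (deriv^[k] u) 2 (volume.restrict (Set.Ioi a)))
    (hvL2 : ∀ k ≤ 3, MemLp (deriv^[k] v) 2 (volume.restrict (Set.Ioi a)))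
    (hint1 : Integrable (fun x => (starRingEnd ℂ) (u x) *
        ((α : ℂ) * deriv^[3] v x + (β : ℂ) * deriv v x)) (volume.restrict (Set.Ioi a)))
    (hint2 : Integrable (fun x => (starRingEnd ℂ)
        ((α : ℂ) * deriv^[3] u x + (β : ℂ) * deriv u x) * v x)
        (volume.restrict (Set.Ioi a))) :
    (∫ x in Set.Ioi a, (starRingEnd ℂ) (u x) *
        ((α : ℂ) * deriv^[3] v x + (β : ℂ) * deriv v x)) +
    (∫ x in Set.Ioi a, (starRingEnd ℂ)
        ((α : ℂ) * deriv^[3] u x + (β : ℂ) * deriv u x) * v x) =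
      - ((α : ℂ) * ((starRingEnd ℂ) (u a) * deriv^[2] v a -
          (starRingEnd ℂ) (deriv u a) * deriv v a +
          (starRingEnd ℂ) (deriv^[2] u a) * v a) +
        (β : ℂ) * (starRingEnd ℂ) (u a) * v a) := by
  -- derivatives of iterates
  have hD : ∀ (w : ℝ → ℂ), ContDiff ℝ 3 w → ∀ k < 3, ∀ x : ℝ,
      HasDerivAt (deriv^[k] w) (deriv^[k+1] w x) x := by
    intro w hw k hk x
    have hck : ContDiff ℝ ((3 - k : ℕ) : ℕ) (deriv^[k] w) := by
      have : ContDiff ℝ (((3 - k) + k : ℕ) : ℕ) w := by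
        have : (3 - k) + k = 3 := Nat.sub_add_cancel hk.le
        rw [this]; exact_mod_cast hw
      exact ContDiff.iterate_deriv' _ _ this
    have hdiff : DifferentiableAt ℝ (deriv^[k] w) x := by
      have h1 : (1 : ℕ) ≤ 3 - k := by omega
      exact (hck.differentiable (by exact_mod_cast (show 3 - k ≠ 0 by omega))).differentiableAt
    have := hdiff.hasDerivAt
    rwa [show deriv^[k+1] w x = deriv (deriv^[k] w) x by
      rw [Function.iterate_succ_apply']]
  set μ := volume.restrict (Set.Ioi a)
  -- conjugated derivatives
  have hDuc : ∀ k < 3, ∀ x : ℝ,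
      HasDerivAt (fun y => (starRingEnd ℂ) (deriv^[k] u y))
        ((starRingEnd ℂ) (deriv^[k+1] u x)) x := by
    intro k hk x
    have h := (hD u hu k hk x).star
    simp only [starRingEnd_apply]
    exact h
  -- the boundary-form function
  set F : ℝ → ℂ := fun x =>
    (α : ℂ) * ((starRingEnd ℂ) (u x) * deriv^[2] v x -
        (starRingEnd ℂ) (deriv u x) * deriv v x +
        (starRingEnd ℂ) (deriv^[2] u x) * v x) +
      (β : ℂ) * (starRingEnd ℂ) (u x) * v x with hFdef
  set g : ℝ → ℂ := fun x =>
    (starRingEnd ℂ) (u x) * ((α : ℂ) * deriv^[3] v x + (β : ℂ) * deriv v x) +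
      (starRingEnd ℂ) ((α : ℂ) * deriv^[3] u x + (β : ℂ) * deriv u x) * v x with hgdef
  have hd1 : ∀ x : ℝ, deriv^[1] u x = deriv u x := fun x => by simp
  have hd1v : ∀ x : ℝ, deriv^[1] v x = deriv v x := fun x => by simp
  have hF : ∀ x : ℝ, HasDerivAt F (g x) x := by
    intro x
    have h00 := (hDuc 0 (by norm_num) x).mul (hD v hv 2 (by norm_num) x)
    have h11 : HasDerivAt (fun y => (starRingEnd ℂ) (deriv u y) * deriv v y)
        ((starRingEnd ℂ) (deriv^[2] u x) * deriv v x +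
          (starRingEnd ℂ) (deriv u x) * deriv^[2] v x) x := by
      have := (hDuc 1 (by norm_num) x).mul (hD v hv 1 (by norm_num) x)
      simpa [Pi.mul_def] using this
    have h22 : HasDerivAt (fun y => (starRingEnd ℂ) (deriv^[2] u y) * v y)
        ((starRingEnd ℂ) (deriv^[3] u x) * v x +
          (starRingEnd ℂ) (deriv^[2] u x) * deriv v x) x := by
      have := (hDuc 2 (by norm_num) x).mul (hD v hv 0 (by norm_num) x)
      simpa [Pi.mul_def] using this
    have h0v : HasDerivAt (fun y => (starRingEnd ℂ) (u y) * v y)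
        ((starRingEnd ℂ) (deriv u x) * v x +
          (starRingEnd ℂ) (u x) * deriv v x) x := by
      have := (hDuc 0 (by norm_num) x).mul (hD v hv 0 (by norm_num) x)
      simpa [Pi.mul_def] using this
    have h00' : HasDerivAt (fun y => (starRingEnd ℂ) (u y) * deriv^[2] v y)
        ((starRingEnd ℂ) (deriv u x) * deriv^[2] v x +
          (starRingEnd ℂ) (u x) * deriv^[3] v x) x := by
      simpa [Pi.mul_def] using h00
    have hmain := (((h00'.sub h11).add h22).const_mul ((α : ℂ))).add
      (h0v.const_mul ((β : ℂ)))
    have hfun : F = fun y =>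
        (α : ℂ) * ((starRingEnd ℂ) (u y) * deriv^[2] v y -
            (starRingEnd ℂ) (deriv u y) * deriv v y +
            (starRingEnd ℂ) (deriv^[2] u y) * v y) +
          (β : ℂ) * ((starRingEnd ℂ) (u y) * v y) := by
      funext y
      simp only [hFdef]
      ring
    have hmain' : HasDerivAt F
        ((α : ℂ) * ((starRingEnd ℂ) (deriv u x) * deriv^[2] v x +
            (starRingEnd ℂ) (u x) * deriv^[3] v x -
            ((starRingEnd ℂ) (deriv^[2] u x) * deriv v x +
              (starRingEnd ℂ) (deriv u x) * deriv^[2] v x) +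
            ((starRingEnd ℂ) (deriv^[3] u x) * v x +
              (starRingEnd ℂ) (deriv^[2] u x) * deriv v x)) +
          (β : ℂ) * ((starRingEnd ℂ) (deriv u x) * v x +
            (starRingEnd ℂ) (u x) * deriv v x)) x := by
      rw [hfun]
      exact hmain
    refine hmain'.congr_deriv ?_
    simp only [hgdef, map_add, map_mul, Complex.conj_ofReal]
    ring
  -- F is integrable on (a, ∞)
  have hFint : Integrable F μ := by
    have t1 := conjL2_mul_integrable a u (deriv^[2] v)
      (huL2 0 (by norm_num)) (hvL2 2 (by norm_num))
    have t2 := conjL2_mul_integrable a (deriv^[1] u) (deriv^[1] v)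
      (huL2 1 (by norm_num)) (hvL2 1 (by norm_num))
    have t3 := conjL2_mul_integrable a (deriv^[2] u) v
      (huL2 2 (by norm_num)) (hvL2 0 (by norm_num))
    have t4 := conjL2_mul_integrable a u v
      (huL2 0 (by norm_num)) (hvL2 0 (by norm_num))
    simp only [Function.iterate_one] at t2
    have := (((t1.sub t2).add t3).const_mul ((α : ℂ))).add (t4.const_mul ((β : ℂ)))
    refine this.congr ?_
    filter_upwards with x
    simp only [hFdef, Pi.sub_apply, Pi.add_apply]
    ring
  have hgint : Integrable g μ := by
    have := hint1.add hint2
    exact this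
  have hlim : Filter.Tendsto F Filter.atTop (nhds 0) :=
    tendsto_zero_of_hasDerivAt_of_integrableOn_Ioi (fun x _ => hF x) hgint hFint
  have key : ∫ x in Set.Ioi a, g x = 0 - F a :=
    integral_Ioi_of_hasDerivAt_of_tendsto' (fun x _ => hF x) hgint hlim
  rw [integral_add hint1 hint2] at key
  rw [key]
  simp [hFdef]
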